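/- Let q(t) := (θ₂/4)t² − log cosh(θ₂t) with θ₂ > 1/2, and let m > 0 be the unique positive root of m = tanh(2θ₂m). Then q attains its global minimum on (0,∞) uniquely at t = 2m, with q''(2m) > 0, and q(−t) = q(t) so the global minimum on (−∞,0) is at t = −2m. -/

import Mathlib

lemma aux_tanh_lt_one (x : ℝ) : Real.tanh x < 1 := by
  rw [Real.tanh_eq_sinh_div_cosh, div_lt_one (Real.cosh_pos x)]
  nlinarith [Real.cosh_sub_sinh x, Real.exp_pos (-x)]

lemma aux_neg_one_lt_tanh (x : ℝ) : -1 < Real.tanh x := by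
  rw [Real.tanh_eq_sinh_div_cosh, lt_div_iff₀ (Real.cosh_pos x)]
  nlinarith [Real.cosh_add_sinh x, Real.exp_pos x]

lemma aux_tanh_hasDerivAt (x : ℝ) :
    HasDerivAt Real.tanh (1 - Real.tanh x ^ 2) x := by
  have h := (Real.hasDerivAt_sinh x).div (Real.hasDerivAt_cosh x) (Real.cosh_pos x).ne'
  have hfun : Real.tanh = fun y => Real.sinh y / Real.cosh y :=
    funext fun y => Real.tanh_eq_sinh_div_cosh y
  rw [hfun]
  refine h.congr_deriv ?_
  have hc := (Real.cosh_pos x).ne'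
  field_simp

lemma aux_tanh_strictMono : StrictMono Real.tanh :=
  strictMono_of_deriv_pos fun x => by
    rw [(aux_tanh_hasDerivAt x).deriv]
    nlinarith [aux_tanh_lt_one x, aux_neg_one_lt_tanh x]

lemma aux_tanh_nonneg {x : ℝ} (hx : 0 ≤ x) : 0 ≤ Real.tanh x := by
  have := aux_tanh_strictMono.monotone hx
  simpa [Real.tanh_zero] using this

theorem q_min_supercritical (θ₂ m : ℝ) (h : 1/2 < θ₂)
    (hm : m ∈ Set.Ioo (0:ℝ) 1) (hroot : m = Real.tanh (2 * θ₂ * m))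
    (huniq : ∀ m' ∈ Set.Ioo (0:ℝ) 1, m' = Real.tanh (2 * θ₂ * m') → m' = m) :
    (∀ t : ℝ, 0 < t → t ≠ 2 * m →
      θ₂ / 4 * (2*m)^2 - Real.log (Real.cosh (θ₂ * (2*m))) <
        θ₂ / 4 * t^2 - Real.log (Real.cosh (θ₂ * t))) ∧
    0 < deriv (deriv (fun t : ℝ => θ₂ / 4 * t^2 - Real.log (Real.cosh (θ₂ * t)))) (2*m) ∧
    (∀ t : ℝ, θ₂ / 4 * (-t)^2 - Real.log (Real.cosh (θ₂ * (-t))) =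
        θ₂ / 4 * t^2 - Real.log (Real.cosh (θ₂ * t))) := by
  obtain ⟨hm0, hm1⟩ := hm
  have hθ : 0 < θ₂ := by linarith
  -- the auxiliary function g
  set g : ℝ → ℝ := fun s => Real.tanh (2 * θ₂ * s) - s with hgdef
  set G' : ℝ → ℝ := fun s => (1 - Real.tanh (2 * θ₂ * s) ^ 2) * (2 * θ₂) - 1 with hGdef
  have hg : ∀ s : ℝ, HasDerivAt g (G' s) s := by
    intro s
    have hin : HasDerivAt (fun s : ℝ => 2 * θ₂ * s) (2 * θ₂) s := by
      simpa using (hasDerivAt_id s).const_mul (2 * θ₂)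
    exact ((aux_tanh_hasDerivAt (2 * θ₂ * s)).comp s hin).sub (hasDerivAt_id s)
  have hgderiv : ∀ s : ℝ, deriv g s = G' s := fun s => (hg s).deriv
  have hgcont : Continuous g :=
    continuous_iff_continuousAt.2 fun s => (hg s).differentiableAt.continuousAt
  have g0 : g 0 = 0 := by simp [hgdef]
  have gm : g m = 0 := by simp [hgdef, ← hroot]
  -- Rolle
  obtain ⟨ξ, hξmem, hξ⟩ := exists_hasDerivAt_eq_zero hm0 hgcont.continuousOn
    (by rw [g0, gm]) (fun x _ => hg x)
  obtain ⟨hξ0, hξm⟩ := hξmem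
  -- G' is strictly decreasing on [0,∞)
  have hanti : ∀ a b : ℝ, 0 ≤ a → a < b → G' b < G' a := by
    intro a b ha hab
    have h1 : Real.tanh (2 * θ₂ * a) < Real.tanh (2 * θ₂ * b) :=
      aux_tanh_strictMono (by nlinarith)
    have h2 : 0 ≤ Real.tanh (2 * θ₂ * a) := aux_tanh_nonneg (by nlinarith)
    have h3 : Real.tanh (2 * θ₂ * a) ^ 2 < Real.tanh (2 * θ₂ * b) ^ 2 := by nlinarith
    simp only [hGdef]
    nlinarith [mul_pos (sub_pos.mpr h3) hθ]
  have h'pos : ∀ s : ℝ, 0 ≤ s → s < ξ → 0 < G' s := fun s hs hsξ => by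
    have := hanti s ξ hs hsξ; linarith [hξ.symm.le]
  have h'neg : ∀ s : ℝ, ξ < s → G' s < 0 := fun s hs => by
    have := hanti ξ s hξ0.le hs; linarith [hξ.le]
  -- monotonicity of g
  have gmono : StrictMonoOn g (Set.Icc 0 ξ) := by
    apply strictMonoOn_of_deriv_pos (convex_Icc 0 ξ) hgcont.continuousOn
    intro x hx
    rw [interior_Icc] at hx
    rw [hgderiv]
    exact h'pos x hx.1.le hx.2
  have ganti : StrictAntiOn g (Set.Ici ξ) := by
    apply strictAntiOn_of_deriv_neg (convex_Ici ξ) hgcont.continuousOn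
    intro x hx
    rw [interior_Ici] at hx
    rw [hgderiv]
    exact h'neg x hx
  have gpos : ∀ s : ℝ, 0 < s → s < m → 0 < g s := by
    intro s hs hsm
    rcases le_or_gt s ξ with hc | hc
    · have := gmono (Set.mem_Icc.2 ⟨le_rfl, hξ0.le⟩) (Set.mem_Icc.2 ⟨hs.le, hc⟩) hs
      rwa [g0] at this
    · have := ganti (Set.mem_Ici.2 hc.le) (Set.mem_Ici.2 hξm.le) hsm
      rwa [gm] at this
  have gneg : ∀ s : ℝ, m < s → g s < 0 := by
    intro s hs
    have := ganti (Set.mem_Ici.2 hξm.le) (Set.mem_Ici.2 (hξm.trans hs).le) hs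
    rwa [gm] at this
  -- the key inequality at m
  have key : (1 - m ^ 2) * (2 * θ₂) - 1 < 0 := by
    have := h'neg m hξm
    simpa only [hGdef, ← hroot] using this
  -- derivative of q
  set Q : ℝ → ℝ := fun t => θ₂ / 4 * t ^ 2 - Real.log (Real.cosh (θ₂ * t)) with hQdef
  set Q' : ℝ → ℝ := fun t => θ₂ / 2 * t - θ₂ * Real.tanh (θ₂ * t) with hQ'def
  have hQ : ∀ t : ℝ, HasDerivAt Q (Q' t) t := by
    intro t
    have hin : HasDerivAt (fun t : ℝ => θ₂ * t) θ₂ t := by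
      simpa using (hasDerivAt_id t).const_mul θ₂
    have h1 : HasDerivAt (fun t : ℝ => θ₂ / 4 * t ^ 2) (θ₂ / 4 * (2 * t ^ 1)) t :=
      (hasDerivAt_pow 2 t).const_mul (θ₂ / 4)
    have h2 : HasDerivAt (fun t : ℝ => Real.cosh (θ₂ * t)) (Real.sinh (θ₂ * t) * θ₂) t :=
      (Real.hasDerivAt_cosh (θ₂ * t)).comp t hin
    have h3 := h2.log (Real.cosh_pos (θ₂ * t)).ne'
    have h4 := h1.sub h3
    refine h4.congr_deriv (Eq.symm ?_)
    show θ₂ / 2 * t - θ₂ * Real.tanh (θ₂ * t) = _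
    rw [Real.tanh_eq_sinh_div_cosh]
    have hc := (Real.cosh_pos (θ₂ * t)).ne'
    field_simp
    ring
  have hQcont : Continuous Q :=
    continuous_iff_continuousAt.2 fun s => (hQ s).differentiableAt.continuousAt
  have hQderiv : deriv Q = Q' := funext fun t => (hQ t).deriv
  -- sign of Q'
  have hQ'neg : ∀ t : ℝ, 0 < t → t < 2 * m → Q' t < 0 := by
    intro t ht htm
    have hgt := gpos (t / 2) (by linarith) (by linarith)
    have he : 2 * θ₂ * (t / 2) = θ₂ * t := by ring
    rw [hgdef] at hgt
    simp only [he] at hgt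
    simp only [hQ'def]
    nlinarith
  have hQ'pos : ∀ t : ℝ, 2 * m < t → 0 < Q' t := by
    intro t ht
    have hgt := gneg (t / 2) (by linarith)
    have he : 2 * θ₂ * (t / 2) = θ₂ * t := by ring
    rw [hgdef] at hgt
    simp only [he] at hgt
    simp only [hQ'def]
    nlinarith
  have qanti : StrictAntiOn Q (Set.Icc 0 (2 * m)) := by
    apply strictAntiOn_of_deriv_neg (convex_Icc _ _) hQcont.continuousOn
    intro x hx
    rw [interior_Icc] at hx
    rw [hQderiv]
    exact hQ'neg x hx.1 hx.2
  have qmono : StrictMonoOn Q (Set.Ici (2 * m)) := by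
    apply strictMonoOn_of_deriv_pos (convex_Ici _) hQcont.continuousOn
    intro x hx
    rw [interior_Ici] at hx
    rw [hQderiv]
    exact hQ'pos x hx
  refine ⟨?_, ?_, ?_⟩
  · intro t ht htne
    rcases lt_or_gt_of_ne htne with hc | hc
    · exact qanti (Set.mem_Icc.2 ⟨ht.le, hc.le⟩)
        (Set.mem_Icc.2 ⟨by linarith, le_rfl⟩) hc
    · exact qmono (Set.mem_Ici.2 le_rfl) (Set.mem_Ici.2 hc.le) hc
  · -- second derivative
    have hin : HasDerivAt (fun t : ℝ => θ₂ * t) θ₂ (2 * m) := by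
      simpa using (hasDerivAt_id (2 * m)).const_mul θ₂
    have h2 : HasDerivAt Q'
        (θ₂ / 2 - ((1 - Real.tanh (θ₂ * (2 * m)) ^ 2) * θ₂) * θ₂) (2 * m) := by
      have ha : HasDerivAt (fun t : ℝ => θ₂ / 2 * t) (θ₂ / 2) (2 * m) := by
        simpa using (hasDerivAt_id (2 * m)).const_mul (θ₂ / 2)
      have hb : HasDerivAt (fun t : ℝ => Real.tanh (θ₂ * t))
          ((1 - Real.tanh (θ₂ * (2 * m)) ^ 2) * θ₂) (2 * m) :=
        (aux_tanh_hasDerivAt (θ₂ * (2 * m))).comp _ hin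
      have := ha.sub (hb.const_mul θ₂)
      refine this.congr_deriv ?_
      ring
    have he : θ₂ * (2 * m) = 2 * θ₂ * m := by ring
    rw [hQderiv, h2.deriv, he, ← hroot]
    nlinarith
  · intro t
    simp [mul_neg, Real.cosh_neg, neg_sq]
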